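/- Let b : ℝ^d → ℝ be continuously differentiable and let x : [0,1] → ℝ^d be a solution of x'(t) = u(t) where u is continuous. If for all t ∈ [0,1], ∇b(x(t))ᵀu(t) + ε·sgn(b(x(t)) - δ)·|b(x(t)) - δ|^ρ ≥ 0 with ε > 0, ρ ∈ (0,1), δ > 0, and b(x(0)) ≥ δ, then b(x(t)) ≥ δ for all t ∈ [0,1]. -/

import Mathlib

open scoped RealInnerProductSpace

theorem stmt12 (d : ℕ) (b : EuclideanSpace ℝ (Fin d) → ℝ) (hb : ContDiff ℝ 1 b)
    (x : ℝ → EuclideanSpace ℝ (Fin d)) (u : ℝ → EuclideanSpace ℝ (Fin d))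
    (hu : Continuous u)
    (hx : ∀ t ∈ Set.Icc (0:ℝ) 1, HasDerivAt x (u t) t)
    (ε ρ δ : ℝ) (hε : 0 < ε) (hρ0 : 0 < ρ) (hρ1 : ρ < 1) (hδ : 0 < δ)
    (hcbf : ∀ t ∈ Set.Icc (0:ℝ) 1,
      ⟪gradient b (x t), u t⟫ + ε * Real.sign (b (x t) - δ) * |b (x t) - δ| ^ ρ ≥ 0)
    (h0 : b (x 0) ≥ δ) :
    ∀ t ∈ Set.Icc (0:ℝ) 1, b (x t) ≥ δ := by
  set g : ℝ → ℝ := fun s => b (x s) - δ with hg_def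
  -- the derivative of g at points of Icc 0 1
  have hgrad : ∀ y v, ⟪gradient b y, v⟫ = fderiv ℝ b y v := by
    intro y v
    simp [gradient, InnerProductSpace.toDual_symm_apply]
  have hgderiv : ∀ s ∈ Set.Icc (0:ℝ) 1,
      HasDerivAt g (⟪gradient b (x s), u s⟫) s := by
    intro s hs
    have hbd : HasFDerivAt b (fderiv ℝ b (x s)) (x s) :=
      ((hb.differentiable one_ne_zero) (x s)).hasFDerivAt
    have := hbd.comp_hasDerivAt s (hx s hs)
    rw [hgrad]
    exact this.sub_const δ
  have hgcont : ContinuousOn g (Set.Icc 0 1) := fun s hs =>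
    ((hgderiv s hs).continuousAt).continuousWithinAt
  intro t ht
  by_contra hlt
  push_neg at hlt
  have hgt : g t < 0 := by simpa [hg_def] using sub_neg.mpr hlt
  -- the set of times ≤ t where g is nonneg
  set S : Set ℝ := {s | s ∈ Set.Icc 0 t ∧ 0 ≤ g s} with hS_def
  have hIcc_sub : Set.Icc (0:ℝ) t ⊆ Set.Icc 0 1 :=
    Set.Icc_subset_Icc le_rfl ht.2
  have hSclosed : IsClosed S := by
    have : S = Set.Icc 0 t ∩ g ⁻¹' Set.Ici 0 := by
      ext s; simp [hS_def, Set.mem_Ici, and_comm]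
    rw [this]
    exact ContinuousOn.preimage_isClosed_of_isClosed
      (hgcont.mono hIcc_sub) isClosed_Icc isClosed_Ici
  have h0S : (0:ℝ) ∈ S := ⟨⟨le_rfl, ht.1⟩, by simpa [hg_def] using sub_nonneg.mpr h0⟩
  have hSbdd : BddAbove S := ⟨t, fun s hs => hs.1.2⟩
  set s₀ := sSup S with hs₀_def
  have hs₀S : s₀ ∈ S := hSclosed.csSup_mem ⟨0, h0S⟩ hSbdd
  have hs₀t : s₀ < t := by
    rcases lt_or_eq_of_le hs₀S.1.2 with h | h
    · exact h
    · exact absurd (h ▸ hs₀S.2) (not_le.mpr hgt)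
  have hneg : ∀ r ∈ Set.Ioc s₀ t, g r < 0 := by
    intro r hr
    by_contra hge
    push_neg at hge
    have : r ∈ S := ⟨⟨le_trans hs₀S.1.1 hr.1.le, hr.2⟩, hge⟩
    exact absurd (le_csSup hSbdd this) (not_le.mpr hr.1)
  -- g strictly monotone on [s₀, t]
  have hmono : StrictMonoOn g (Set.Icc s₀ t) := by
    apply strictMonoOn_of_deriv_pos (convex_Icc s₀ t)
    · exact hgcont.mono (Set.Icc_subset_Icc hs₀S.1.1 ht.2)
    · intro r hr
      rw [interior_Icc] at hr
      have hr1 : r ∈ Set.Icc (0:ℝ) 1 :=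
        ⟨le_trans hs₀S.1.1 hr.1.le, le_trans hr.2.le ht.2⟩
      have hd := hgderiv r hr1
      rw [hd.deriv]
      have hgr : g r < 0 := hneg r ⟨hr.1, hr.2.le⟩
      have hsign : Real.sign (b (x r) - δ) = -1 := Real.sign_of_neg hgr
      have hpow : (0:ℝ) < |b (x r) - δ| ^ ρ :=
        Real.rpow_pos_of_pos (abs_pos.mpr (ne_of_lt hgr)) ρ
      have := hcbf r hr1
      rw [hsign] at this
      nlinarith [mul_pos hε hpow]
  have := hmono (Set.left_mem_Icc.mpr hs₀t.le) (Set.right_mem_Icc.mpr hs₀t.le) hs₀t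
  linarith [hs₀S.2, hgt]
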